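/- Let A be a finitely graded k-algebra with a homogeneous normal element x of positive degree. If the quotient ring A/xA is right noetherian, then A is right noetherian. -/

import Mathlib

open DirectSum
section ALL
variable {k A : Type*} [Field k] [Ring A] [Algebra k A]
variable (𝒜 : ℕ → Submodule k A) [GradedAlgebra 𝒜]




/-- the `i`-th homogeneous component -/
noncomputable def pA (i : ℕ) (a : A) : A := (DirectSum.decompose 𝒜 a i : A)

lemma pA_add (i : ℕ) (a b : A) : pA 𝒜 i (a + b) = pA 𝒜 i a + pA 𝒜 i b := by
  simp [pA, DirectSum.decompose_add]

lemma pA_sub (i : ℕ) (a b : A) : pA 𝒜 i (a - b) = pA 𝒜 i a - pA 𝒜 i b := by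
  simp [pA, DirectSum.decompose_sub]

lemma pA_mem (i : ℕ) (a : A) : pA 𝒜 i a ∈ 𝒜 i := SetLike.coe_mem _

lemma pA_of_mem_same {i : ℕ} {a : A} (h : a ∈ 𝒜 i) : pA 𝒜 i a = a :=
  DirectSum.decompose_of_mem_same 𝒜 h

lemma pA_zero (i : ℕ) : pA 𝒜 i (0 : A) = 0 := by simp [pA]

lemma pA_mul_left {m : ℕ} {t : A} (ht : t ∈ 𝒜 m) (c : A) (n : ℕ) :
    pA 𝒜 n (t * c) = if m ≤ n then t * pA 𝒜 (n - m) c else 0 := by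
  split_ifs with h
  · exact DirectSum.coe_decompose_mul_of_left_mem_of_le 𝒜 ht h
  · exact DirectSum.coe_decompose_mul_of_left_mem_of_not_le 𝒜 ht h

lemma pA_mul_right {m : ℕ} {t : A} (ht : t ∈ 𝒜 m) (c : A) (n : ℕ) :
    pA 𝒜 n (c * t) = if m ≤ n then pA 𝒜 (n - m) c * t else 0 := by
  split_ifs with h
  · exact DirectSum.coe_decompose_mul_of_right_mem_of_le 𝒜 ht h
  · exact DirectSum.coe_decompose_mul_of_right_mem_of_not_le 𝒜 ht h

lemma pA_bound (a : A) : ∃ N : ℕ, ∀ i, N ≤ i → pA 𝒜 i a = 0 := by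
  classical
  refine ⟨(DirectSum.decompose 𝒜 a).support.sup id + 1, fun i hi => ?_⟩
  have : i ∉ (DirectSum.decompose 𝒜 a).support := by
    intro hmem
    have := Finset.le_sup (f := id) hmem
    simp only [id] at this
    omega
  have h0 : (DirectSum.decompose 𝒜 a) i = 0 := DFinsupp.notMem_support_iff.mp this
  simp [pA, h0]

lemma pA_sum_support (a : A) [∀ (i : ℕ) (y : 𝒜 i), Decidable (y ≠ 0)] :
    a = ∑ i ∈ (DirectSum.decompose 𝒜 a).support, pA 𝒜 i a :=
  (DirectSum.sum_support_decompose 𝒜 a).symm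

/-- membership in a submodule (over any scalars) containing all components -/
lemma pA_sum_mem {S : Type*} [Semiring S] [Module S A] (M : Submodule S A) (a : A)
    (h : ∀ i, pA 𝒜 i a ∈ M) : a ∈ M := by
  classical
  rw [pA_sum_support 𝒜 a]
  exact Submodule.sum_mem _ fun i _ => h i

lemma pA_eq_zero_of_all (a : A) (h : ∀ i, pA 𝒜 i a = 0) : a = 0 := by
  classical
  rw [pA_sum_support 𝒜 a]
  simp [h]




lemma span_homog_closed (T : Set A) (hT : ∀ t ∈ T, ∃ m, t ∈ 𝒜 m) :
    ∀ a ∈ Submodule.span Aᵐᵒᵖ T, ∀ i, pA 𝒜 i a ∈ Submodule.span Aᵐᵒᵖ T := by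
  classical
  intro a ha i
  obtain ⟨c, hc, rfl⟩ := Submodule.mem_span_set.mp ha
  have hproj : ∀ b : A, pA 𝒜 i b = GradedRing.proj 𝒜 i b := fun b => rfl
  have : pA 𝒜 i (c.sum fun t r => r • t) = ∑ t ∈ c.support, pA 𝒜 i (t * (c t).unop) := by
    rw [Finsupp.sum]
    simp only [hproj]
    rw [map_sum]
    rfl
  rw [this]
  refine Submodule.sum_mem _ fun t htc => ?_
  obtain ⟨m, hm⟩ := hT t (hc htc)
  rw [pA_mul_left 𝒜 hm]
  split_ifs
  · have : t * pA 𝒜 (i - m) ((c t).unop) = (MulOpposite.op (pA 𝒜 (i - m) ((c t).unop))) • t := rfl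
    rw [this]
    exact Submodule.smul_mem _ _ (Submodule.subset_span (hc htc))
  · exact Submodule.zero_mem _

-- basic normality consequences
lemma norm1 (x : A) (hnormal : {y : A | ∃ a : A, y = x * a} = {y : A | ∃ a : A, y = a * x})
    (a : A) : ∃ b, x * a = b * x := by
  have : x * a ∈ {y : A | ∃ c : A, y = x * c} := ⟨a, rfl⟩
  rw [hnormal] at this; obtain ⟨b, hb⟩ := this; exact ⟨b, hb⟩

lemma norm2 (x : A) (hnormal : {y : A | ∃ a : A, y = x * a} = {y : A | ∃ a : A, y = a * x})
    (a : A) : ∃ b, a * x = x * b := by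
  have : a * x ∈ {y : A | ∃ c : A, y = c * x} := ⟨a, rfl⟩
  rw [← hnormal] at this; obtain ⟨b, hb⟩ := this; exact ⟨b, hb⟩

lemma X_mem_iff (x : A) (a : A) :
    a ∈ Submodule.span Aᵐᵒᵖ ({x} : Set A) ↔ ∃ c : A, a = x * c := by
  rw [Submodule.mem_span_singleton]
  constructor
  · rintro ⟨c, rfl⟩; exact ⟨c.unop, rfl⟩
  · rintro ⟨c, rfl⟩; exact ⟨MulOpposite.op c, rfl⟩

/-- The span of x is a two-sided ideal. -/
noncomputable def Tx (x : A)
    (hnormal : {y : A | ∃ a : A, y = x * a} = {y : A | ∃ a : A, y = a * x}) : TwoSidedIdeal A :=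
  TwoSidedIdeal.mk' (Submodule.span Aᵐᵒᵖ ({x} : Set A) : Set A)
    (Submodule.zero_mem _)
    (fun ha hb => Submodule.add_mem _ ha hb)
    (fun ha => Submodule.neg_mem _ ha)
    (fun {c y} hy => by
      rw [SetLike.mem_coe, X_mem_iff] at hy ⊢
      obtain ⟨b, rfl⟩ := hy
      obtain ⟨e, he⟩ := norm2 x hnormal c
      exact ⟨e * b, by rw [← mul_assoc, ← mul_assoc, he]⟩)
    (fun {y c} hy => by
      rw [SetLike.mem_coe, X_mem_iff] at hy ⊢
      obtain ⟨b, rfl⟩ := hy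
      exact ⟨b * c, by rw [mul_assoc]⟩)

lemma mem_Tx (x : A)
    (hnormal : {y : A | ∃ a : A, y = x * a} = {y : A | ∃ a : A, y = a * x}) (a : A) :
    a ∈ Tx x hnormal ↔ a ∈ Submodule.span Aᵐᵒᵖ ({x} : Set A) :=
  TwoSidedIdeal.mem_mk' _ _ _ _ _ _ a

/-- kernel characterization of the RingQuot map -/
lemma ker_pi (x : A)
    (hnormal : {y : A | ∃ a : A, y = x * a} = {y : A | ∃ a : A, y = a * x}) (a : A)
    (h : RingQuot.mkRingHom (fun a b : A => a = x ∧ b = 0) a = 0) :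
    a ∈ Submodule.span Aᵐᵒᵖ ({x} : Set A) := by
  set c := (Tx x hnormal).ringCon
  have hxc : c x 0 := by
    rw [TwoSidedIdeal.rel_iff, sub_zero, mem_Tx]
    exact (X_mem_iff x x).mpr ⟨1, (mul_one x).symm⟩
  let φ : RingQuot (fun a b : A => a = x ∧ b = 0) →+* c.Quotient :=
    RingQuot.lift ⟨c.mk', by rintro a b ⟨rfl, rfl⟩; exact (RingCon.eq c).mpr hxc⟩
  have : φ (RingQuot.mkRingHom _ a) = c.mk' a := by
    rw [RingQuot.lift_mkRingHom_apply]
  rw [h, map_zero] at this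
  have h0 : c.mk' a = c.mk' 0 := by rw [← this]; rfl
  have := (RingCon.eq c).mp h0
  rw [TwoSidedIdeal.rel_iff, sub_zero, mem_Tx] at this
  exact this

lemma pi_x_zero (x : A) :
    RingQuot.mkRingHom (fun a b : A => a = x ∧ b = 0) x = 0 := by
  have := RingQuot.mkRingHom_rel (r := fun a b : A => a = x ∧ b = 0) ⟨rfl, rfl⟩
  rw [this, map_zero]


/-- The canonical right-module equivalence between `B` and `Bᵐᵒᵖ` over `Bᵐᵒᵖ`. -/
def opEquiv (B : Type*) [Ring B] : B ≃ₗ[Bᵐᵒᵖ] Bᵐᵒᵖ where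
  toFun := MulOpposite.op
  invFun := MulOpposite.unop
  map_add' _ _ := rfl
  map_smul' _ _ := rfl
  left_inv _ := rfl
  right_inv _ := rfl

theorem lift_gen (x : A)
    (hnormal : {y : A | ∃ a : A, y = x * a} = {y : A | ∃ a : A, y = a * x})
    (hquot : IsNoetherianRing (RingQuot (fun a b : A => a = x ∧ b = 0))ᵐᵒᵖ)
    (I : Submodule Aᵐᵒᵖ A) :
    ∃ s : Finset A, (↑s : Set A) ⊆ (I : Set A) ∧ ∀ a ∈ I,
      ∃ b ∈ Submodule.span Aᵐᵒᵖ (↑s : Set A), a - b ∈ Submodule.span Aᵐᵒᵖ ({x} : Set A) := by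
  classical
  set B := RingQuot (fun a b : A => a = x ∧ b = 0) with hB
  set π : A →+* B := RingQuot.mkRingHom _ with hπ
  have hπsurj : Function.Surjective π := RingQuot.mkRingHom_surjective _
  set πop : Aᵐᵒᵖ →+* Bᵐᵒᵖ := RingHom.op π with hπop
  haveI : RingHomSurjective πop := by
    constructor
    intro b
    obtain ⟨a, ha⟩ := hπsurj b.unop
    exact ⟨MulOpposite.op a, by simp [hπop, RingHom.op, ha]⟩
  let πₛ : A →ₛₗ[πop] B :=
    { toFun := π
      map_add' := fun a b => map_add π a b
      map_smul' := fun c a => by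
        show π (a * c.unop) = _
        rw [map_mul]
        rfl }
  haveI : IsNoetherian Bᵐᵒᵖ Bᵐᵒᵖ := hquot
  haveI : IsNoetherian Bᵐᵒᵖ B := isNoetherian_of_linearEquiv (opEquiv B).symm
  set J : Submodule Bᵐᵒᵖ B := I.map πₛ with hJ
  obtain ⟨S, hS⟩ : J.FG := IsNoetherian.noetherian J
  -- lifts of generators
  have hSlift : ∀ g ∈ S, ∃ a ∈ I, π a = g := by
    intro g hg
    have : g ∈ J := hS ▸ Submodule.subset_span hg
    obtain ⟨a, ha, rfl⟩ := Submodule.mem_map.mp this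
    exact ⟨a, ha, rfl⟩
  let u : B → A := fun g => if h : ∃ a ∈ I, π a = g then h.choose else 0
  have hu : ∀ g ∈ S, u g ∈ I ∧ π (u g) = g := by
    intro g hg
    have h := hSlift g hg
    simpa [u, dif_pos h] using ⟨h.choose_spec.1, h.choose_spec.2⟩
  refine ⟨S.image u, ?_, ?_⟩
  · intro a ha
    obtain ⟨g, hg, rfl⟩ := Finset.mem_image.mp (by exact_mod_cast ha)
    exact (hu g hg).1
  · intro a haI
    have hπa : π a ∈ J := ⟨a, haI, rfl⟩
    rw [← hS] at hπa
    obtain ⟨f, -, hf⟩ := Submodule.mem_span_finset.mp hπa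
    -- lift coefficients
    let co : B → A := fun g => (hπsurj (f g).unop).choose
    have hco : ∀ g, π (co g) = (f g).unop := fun g => (hπsurj (f g).unop).choose_spec
    set b : A := ∑ g ∈ S, u g * co g with hb
    refine ⟨b, ?_, ?_⟩
    · refine Submodule.sum_mem _ fun g hg => ?_
      have : u g * co g = (MulOpposite.op (co g)) • u g := rfl
      rw [this]
      refine Submodule.smul_mem _ _ (Submodule.subset_span ?_)
      exact_mod_cast Finset.mem_image_of_mem u hg
    · apply ker_pi x hnormal
      have hπb : π b = π a := by
        rw [hb, map_sum, ← hf]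
        refine Finset.sum_congr rfl fun g hg => ?_
        rw [map_mul, (hu g hg).2, hco]
        rfl
      rw [map_sub, hπb, sub_self]


theorem graded_fg (x : A) (d : ℕ) (hd : 1 ≤ d) (hx : x ∈ 𝒜 d)
    (hnormal : {y : A | ∃ a : A, y = x * a} = {y : A | ∃ a : A, y = a * x})
    (hlift : ∀ I : Submodule Aᵐᵒᵖ A, ∃ s : Finset A, (↑s : Set A) ⊆ (I : Set A) ∧ ∀ a ∈ I,
      ∃ b ∈ Submodule.span Aᵐᵒᵖ (↑s : Set A), a - b ∈ Submodule.span Aᵐᵒᵖ ({x} : Set A)) :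
    ∀ I : Submodule Aᵐᵒᵖ A, (∀ a ∈ I, ∀ i, pA 𝒜 i a ∈ I) → I.FG := by
  classical
  by_contra hcon
  push_neg at hcon
  obtain ⟨I₀, hI₀hom, hI₀fg⟩ := hcon
  set S : Set (Submodule Aᵐᵒᵖ A) :=
    {I | (∀ a ∈ I, ∀ i, pA 𝒜 i a ∈ I) ∧ ¬ I.FG} with hSdef
  have hub : ∀ c ⊆ S, IsChain (· ≤ ·) c → ∀ y ∈ c, ∃ ub ∈ S, ∀ z ∈ c, z ≤ ub := by
    intro c hcS hchain y hyc
    have hne : c.Nonempty := ⟨y, hyc⟩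
    refine ⟨sSup c, ⟨?_, ?_⟩, fun z hz => le_sSup hz⟩
    · intro a ha i
      obtain ⟨I, hIc, haI⟩ := (Submodule.mem_sSup_of_directed hne hchain.directedOn).mp ha
      exact le_sSup hIc ((hcS hIc).1 a haI i)
    · rintro ⟨s, hs⟩
      have hkey : ∀ t : Finset A, (↑t : Set A) ⊆ ((sSup c : Submodule Aᵐᵒᵖ A) : Set A) →
          ∃ I ∈ c, (↑t : Set A) ⊆ (I : Set A) := by
        intro t
        induction t using Finset.induction_on with
        | empty => exact fun _ => ⟨y, hyc, by simp⟩
        | @insert a t ha IH =>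
          intro hsub
          have h1 : a ∈ sSup c := hsub (by simp)
          obtain ⟨I₁, hI₁c, haI₁⟩ := (Submodule.mem_sSup_of_directed hne hchain.directedOn).mp h1
          obtain ⟨I₂, hI₂c, htI₂⟩ := IH fun z hz => hsub (by simp [hz])
          rcases hchain.total hI₁c hI₂c with h | h
          · exact ⟨I₂, hI₂c, by
              rw [Finset.coe_insert]
              exact Set.insert_subset (h haI₁) htI₂⟩
          · exact ⟨I₁, hI₁c, by
              rw [Finset.coe_insert]
              refine Set.insert_subset haI₁ (fun z hz => h (htI₂ hz))⟩
      obtain ⟨I, hIc, htI⟩ := hkey s (by rw [← hs]; exact Submodule.subset_span)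
      have : I = sSup c :=
        le_antisymm (le_sSup hIc) (by rw [← hs]; exact Submodule.span_le.mpr htI)
      exact (hcS hIc).2 ⟨s, by rw [hs, this]⟩
  obtain ⟨M, -, hMS, hMmax⟩ := zorn_le_nonempty₀ S hub I₀ ⟨hI₀hom, hI₀fg⟩
  replace hMmax := fun {y} hy hle => hMmax (y := y) hy hle
  obtain ⟨hMhom, hMfg⟩ := hMS
  -- the right ideal I₂ = {a | a * x ∈ M}
  set I₂ : Submodule Aᵐᵒᵖ A :=
    { carrier := {a | a * x ∈ M}
      add_mem' := fun {a b} ha hb => by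
        show (a + b) * x ∈ M
        rw [add_mul]; exact Submodule.add_mem _ ha hb
      zero_mem' := by show (0 : A) * x ∈ M; rw [zero_mul]; exact Submodule.zero_mem _
      smul_mem' := fun c a ha => by
        show (a * c.unop) * x ∈ M
        obtain ⟨e, he⟩ := norm2 x hnormal c.unop
        rw [mul_assoc, he, ← mul_assoc]
        exact Submodule.smul_mem _ (MulOpposite.op e) ha } with hI₂def
  have hmemI₂ : ∀ a : A, a ∈ I₂ ↔ a * x ∈ M := fun a => Iff.rfl
  have hMI₂ : M ≤ I₂ := by
    intro a ha
    rw [hmemI₂]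
    exact Submodule.smul_mem _ (MulOpposite.op x) ha
  have hI₂hom : ∀ a ∈ I₂, ∀ i, pA 𝒜 i a ∈ I₂ := by
    intro a ha i
    rw [hmemI₂]
    have : pA 𝒜 i a * x = pA 𝒜 (i + d) (a * x) := by
      rw [pA_mul_right 𝒜 hx a (i + d), if_pos (by omega : d ≤ i + d), Nat.add_sub_cancel]
    rw [this]
    exact hMhom _ ((hmemI₂ a).mp ha) _
  obtain ⟨s, hsub, hrep⟩ := hlift M
  have hsM : Submodule.span Aᵐᵒᵖ (↑s : Set A) ≤ M := Submodule.span_le.mpr hsub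
  -- decomposition of elements of M
  have hdecomp : ∀ a ∈ M, ∃ b ∈ Submodule.span Aᵐᵒᵖ (↑s : Set A), ∃ e ∈ I₂,
      a = b + e * x := by
    intro a haM
    obtain ⟨b, hbs, hbX⟩ := hrep a haM
    obtain ⟨e0, he0⟩ := (X_mem_iff x _).mp hbX
    obtain ⟨e, he⟩ := norm1 x hnormal e0
    have heq : a - b = e * x := by rw [he0, he]
    have heM : e * x ∈ M := by rw [← heq]; exact Submodule.sub_mem _ haM (hsM hbs)
    exact ⟨b, hbs, e, (hmemI₂ e).mpr heM, by rw [← heq]; abel⟩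
  by_cases hc2 : I₂ ≤ M
  · -- case I₂ = M : M is generated by homogeneous components of s
    set T : Finset A :=
      s.biUnion (fun u => (DirectSum.decompose 𝒜 u).support.image (fun i => pA 𝒜 i u)) with hT
    have hThom : ∀ t ∈ (↑T : Set A), ∃ m, t ∈ 𝒜 m := by
      intro t ht
      obtain ⟨u, -, hti⟩ := Finset.mem_biUnion.mp (by exact_mod_cast ht)
      obtain ⟨i, -, rfl⟩ := Finset.mem_image.mp hti
      exact ⟨i, pA_mem 𝒜 i u⟩
    have hTM : (↑T : Set A) ⊆ (M : Set A) := by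
      intro t ht
      obtain ⟨u, hu, hti⟩ := Finset.mem_biUnion.mp (by exact_mod_cast ht)
      obtain ⟨i, -, rfl⟩ := Finset.mem_image.mp hti
      exact hMhom u (hsub hu) i
    have hsT : (↑s : Set A) ⊆ (Submodule.span Aᵐᵒᵖ (↑T : Set A) : Set A) := by
      intro u hu
      have : u = ∑ i ∈ (DirectSum.decompose 𝒜 u).support, pA 𝒜 i u := pA_sum_support 𝒜 u
      rw [SetLike.mem_coe, this]
      refine Submodule.sum_mem _ fun i hi => Submodule.subset_span ?_
      exact_mod_cast Finset.mem_biUnion.mpr ⟨u, by exact_mod_cast hu,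
        Finset.mem_image.mpr ⟨i, hi, rfl⟩⟩
    have hclaim : ∀ m : ℕ, ∀ a ∈ M, a ∈ 𝒜 m → a ∈ Submodule.span Aᵐᵒᵖ (↑T : Set A) := by
      intro m
      induction m using Nat.strong_induction_on with
      | _ m IH =>
        intro a haM ham
        obtain ⟨b, hbs, e, heI₂, heq⟩ := hdecomp a haM
        have hbT : b ∈ Submodule.span Aᵐᵒᵖ (↑T : Set A) := Submodule.span_le.mpr hsT hbs
        have key : a = pA 𝒜 m b + pA 𝒜 m (e * x) := by
          conv_lhs => rw [← pA_of_mem_same 𝒜 ham, heq, pA_add]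
        rw [key]
        refine Submodule.add_mem _ (span_homog_closed 𝒜 _ hThom b hbT m) ?_
        rw [pA_mul_right 𝒜 hx e m]
        split_ifs with hdm
        · have hm0 : m - d < m := by omega
          have heM : e ∈ M := hc2 heI₂
          have : pA 𝒜 (m - d) e ∈ Submodule.span Aᵐᵒᵖ (↑T : Set A) :=
            IH _ hm0 _ (hMhom e heM _) (pA_mem 𝒜 _ e)
          exact Submodule.smul_mem _ (MulOpposite.op x) this
        · exact Submodule.zero_mem _
    refine hMfg ⟨T, le_antisymm (Submodule.span_le.mpr hTM) ?_⟩
    intro a haM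
    have : a = ∑ i ∈ (DirectSum.decompose 𝒜 a).support, pA 𝒜 i a := pA_sum_support 𝒜 a
    rw [this]
    exact Submodule.sum_mem _ fun i _ => hclaim i _ (hMhom a haM i) (pA_mem 𝒜 i a)
  · -- case I₂ > M : I₂ is finitely generated by maximality
    have hI₂fg : I₂.FG := by
      by_contra hI₂fg
      exact hc2 (hMmax ⟨hI₂hom, hI₂fg⟩ hMI₂)
    obtain ⟨t, ht⟩ := hI₂fg
    have hmul : ∀ w ∈ Submodule.span Aᵐᵒᵖ (↑t : Set A),
        w * x ∈ Submodule.span Aᵐᵒᵖ (↑(t.image (· * x)) : Set A) := by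
      intro w hw
      obtain ⟨f, -, hf⟩ := Submodule.mem_span_finset.mp hw
      rw [← hf, Finset.sum_mul]
      refine Submodule.sum_mem _ fun v hv => ?_
      have h1 : (f v • v) * x = (v * (f v).unop) * x := rfl
      obtain ⟨e, he⟩ := norm2 x hnormal (f v).unop
      rw [h1, mul_assoc, he, ← mul_assoc]
      refine Submodule.smul_mem _ (MulOpposite.op e) (Submodule.subset_span ?_)
      exact_mod_cast Finset.mem_image_of_mem (· * x) hv
    refine hMfg ⟨s ∪ t.image (· * x), le_antisymm (Submodule.span_le.mpr ?_) ?_⟩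
    · intro g hg
      rcases Finset.mem_union.mp (by exact_mod_cast hg) with h | h
      · exact hsub (by exact_mod_cast h)
      · obtain ⟨v, hv, rfl⟩ := Finset.mem_image.mp h
        have : v ∈ I₂ := ht ▸ Submodule.subset_span (by exact_mod_cast hv)
        exact (hmemI₂ v).mp this
    · intro a haM
      obtain ⟨b, hbs, e, heI₂, heq⟩ := hdecomp a haM
      rw [heq, Finset.coe_union, Submodule.span_union]
      refine Submodule.add_mem _ (Submodule.mem_sup_left hbs) (Submodule.mem_sup_right ?_)
      exact hmul e (by rw [ht]; exact heI₂)
lemma pA_sum {ι : Type*} (s : Finset ι) (f : ι → A) (i : ℕ) :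
    pA 𝒜 i (∑ t ∈ s, f t) = ∑ t ∈ s, pA 𝒜 i (f t) := by
  have hproj : ∀ b : A, pA 𝒜 i b = GradedRing.proj 𝒜 i b := fun b => rfl
  simp only [hproj]
  exact map_sum (GradedRing.proj 𝒜 i) f s

theorem ungraded_fg
    (hgr : ∀ I : Submodule Aᵐᵒᵖ A, (∀ a ∈ I, ∀ i, pA 𝒜 i a ∈ I) → I.FG) :
    ∀ K : Submodule Aᵐᵒᵖ A, K.FG := by
  classical
  intro K
  set Lset : Set A :=
    {c : A | ∃ m : ℕ, ∃ a ∈ K, c = pA 𝒜 m a ∧ ∀ i, m < i → pA 𝒜 i a = 0} with hLdef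
  have hLhom : ∀ c ∈ Lset, ∃ m, c ∈ 𝒜 m := by
    rintro c ⟨m, a, -, rfl, -⟩
    exact ⟨m, pA_mem 𝒜 m a⟩
  set grK : Submodule Aᵐᵒᵖ A := Submodule.span Aᵐᵒᵖ Lset with hgrK
  obtain ⟨G, hG⟩ : grK.FG := hgr grK (span_homog_closed 𝒜 Lset hLhom)
  -- find a finite subset T₀ of Lset spanning grK
  let F : A → (A →₀ Aᵐᵒᵖ) := fun g =>
    if h : ∃ c : A →₀ Aᵐᵒᵖ, (↑c.support : Set A) ⊆ Lset ∧ (c.sum fun mi r => r • mi) = g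
    then h.choose else 0
  have hF : ∀ g ∈ grK, (↑(F g).support : Set A) ⊆ Lset ∧ ((F g).sum fun mi r => r • mi) = g := by
    intro g hg
    have h := Submodule.mem_span_set.mp (hgrK ▸ hg)
    simp only [F, dif_pos h]
    exact h.choose_spec
  set T₀ : Finset A := G.biUnion (fun g => (F g).support) with hT₀
  have hT₀L : (↑T₀ : Set A) ⊆ Lset := by
    intro t ht
    obtain ⟨g, hg, htg⟩ := Finset.mem_biUnion.mp (by exact_mod_cast ht)
    exact (hF g (hG ▸ Submodule.subset_span (by exact_mod_cast hg))).1 htg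
  have hgrle : grK ≤ Submodule.span Aᵐᵒᵖ (↑T₀ : Set A) := by
    rw [← hG]
    refine Submodule.span_le.mpr ?_
    intro g hg
    have hgG : g ∈ grK := hG ▸ Submodule.subset_span hg
    obtain ⟨h1, h2⟩ := hF g hgG
    rw [SetLike.mem_coe, ← h2, Finsupp.sum]
    refine Submodule.sum_mem _ fun t htsupp => Submodule.smul_mem _ _ (Submodule.subset_span ?_)
    exact_mod_cast Finset.mem_biUnion.mpr ⟨g, by exact_mod_cast hg, htsupp⟩
  -- witnesses for elements of Lset
  let W : A → ℕ × A := fun t =>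
    if h : ∃ p : ℕ × A, p.2 ∈ K ∧ t = pA 𝒜 p.1 p.2 ∧ ∀ i, p.1 < i → pA 𝒜 i p.2 = 0
    then h.choose else (0, 0)
  have hW : ∀ t ∈ Lset, (W t).2 ∈ K ∧ t = pA 𝒜 (W t).1 (W t).2 ∧
      ∀ i, (W t).1 < i → pA 𝒜 i (W t).2 = 0 := by
    rintro t ⟨m, a, haK, rfl, htail⟩
    have h : ∃ p : ℕ × A, p.2 ∈ K ∧ pA 𝒜 m a = pA 𝒜 p.1 p.2 ∧
        ∀ i, p.1 < i → pA 𝒜 i p.2 = 0 := ⟨(m, a), haK, rfl, htail⟩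
    simp only [W, dif_pos h]
    exact h.choose_spec
  set gens : Finset A := T₀.image (fun t => (W t).2) with hgens
  set K₀ : Submodule Aᵐᵒᵖ A := Submodule.span Aᵐᵒᵖ (↑gens : Set A) with hK₀
  have hK₀K : K₀ ≤ K := by
    refine Submodule.span_le.mpr ?_
    intro u hu
    obtain ⟨t, ht, rfl⟩ := Finset.mem_image.mp (by exact_mod_cast hu)
    exact (hW t (hT₀L (by exact_mod_cast ht))).1
  have hclaim : ∀ N : ℕ, ∀ a ∈ K, (∀ i, N ≤ i → pA 𝒜 i a = 0) → a ∈ K₀ := by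
    intro N
    induction N with
    | zero =>
      intro a _ h
      have : a = 0 := pA_eq_zero_of_all 𝒜 a fun i => h i (Nat.zero_le i)
      rw [this]; exact Submodule.zero_mem _
    | succ N IH =>
      intro a haK hbd
      have hcL : pA 𝒜 N a ∈ Lset := ⟨N, a, haK, rfl, fun i hi => hbd i hi⟩
      have hcT : pA 𝒜 N a ∈ Submodule.span Aᵐᵒᵖ (↑T₀ : Set A) :=
        hgrle (Submodule.subset_span hcL)
      obtain ⟨φ, -, hφ⟩ := Submodule.mem_span_finset.mp hcT
      -- the approximating element b
      let gco : A → A := fun t =>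
        if (W t).1 ≤ N then pA 𝒜 (N - (W t).1) ((φ t).unop) else 0
      set b : A := ∑ t ∈ T₀, (W t).2 * gco t with hb
      have hbK₀ : b ∈ K₀ := by
        refine Submodule.sum_mem _ fun t ht => ?_
        have : (W t).2 * gco t = (MulOpposite.op (gco t)) • (W t).2 := rfl
        rw [this]
        refine Submodule.smul_mem _ _ (Submodule.subset_span ?_)
        exact_mod_cast Finset.mem_image_of_mem _ ht
      have hgco_mem : ∀ t, gco t ∈ 𝒜 (N - (W t).1) := by
        intro t
        by_cases h : (W t).1 ≤ N
        · simp only [gco, if_pos h]; exact pA_mem 𝒜 _ _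
        · simp only [gco, if_neg h]; exact Submodule.zero_mem _
      -- b has no components above N
      have hbhigh : ∀ j, N < j → pA 𝒜 j b = 0 := by
        intro j hj
        rw [hb, pA_sum]
        refine Finset.sum_eq_zero fun t ht => ?_
        obtain ⟨-, -, htail⟩ := hW t (hT₀L (by exact_mod_cast ht))
        rw [pA_mul_right 𝒜 (hgco_mem t) ((W t).2) j]
        split_ifs with h1
        · by_cases h2 : (W t).1 ≤ N
          · rw [htail (j - (N - (W t).1)) (by omega), zero_mul]
          · simp only [gco, if_neg h2, mul_zero]
        · rfl
      -- the N-th component of b is that of a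
      have hbN : pA 𝒜 N b = pA 𝒜 N a := by
        have hup : pA 𝒜 N a = ∑ t ∈ T₀, pA 𝒜 N (t * (φ t).unop) := by
          conv_lhs => rw [← pA_of_mem_same 𝒜 (pA_mem 𝒜 N a), ← hφ]
          rw [pA_sum]
          exact Finset.sum_congr rfl fun t _ => rfl
        rw [hb, pA_sum, hup]
        refine Finset.sum_congr rfl fun t ht => ?_
        obtain ⟨-, hteq, -⟩ := hW t (hT₀L (by exact_mod_cast ht))
        have htmem : t ∈ 𝒜 (W t).1 := by
          have h0 := pA_mem 𝒜 (W t).1 (W t).2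
          rwa [← hteq] at h0
        rw [pA_mul_left 𝒜 htmem ((φ t).unop) N]
        by_cases h2 : (W t).1 ≤ N
        · rw [pA_mul_right 𝒜 (hgco_mem t) ((W t).2) N, if_pos (by omega : N - (W t).1 ≤ N)]
          have : N - (N - (W t).1) = (W t).1 := by omega
          rw [this, ← hteq, if_pos h2]
          simp only [gco, if_pos h2]
        · simp only [gco, if_neg h2, mul_zero, if_neg h2, pA_zero]
      have hsub : a - b ∈ K₀ := by
        refine IH (a - b) (Submodule.sub_mem _ haK (hK₀K hbK₀)) fun i hi => ?_
        rw [pA_sub]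
        rcases Nat.eq_or_lt_of_le hi with rfl | hlt
        · rw [hbN, sub_self]
        · rw [hbd i hlt, hbhigh i (by omega), sub_zero]
      have : a = (a - b) + b := by abel
      rw [this]
      exact Submodule.add_mem _ hsub hbK₀
  refine ⟨gens, le_antisymm hK₀K ?_⟩
  intro a haK
  obtain ⟨N, hN⟩ := pA_bound 𝒜 a
  exact hclaim N a haK hN


end ALL

/-- Let `A` be a finitely graded `k`-algebra with a homogeneous normal element `x`
of positive degree.  If the quotient ring `A/xA` (the quotient by the two-sided
ideal generated by `x`) is right noetherian, then `A` is right noetherian.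
Right noetherianity of a ring `R` is expressed as `IsNoetherianRing Rᵐᵒᵖ`. -/
theorem stmt_3 {k A : Type*} [Field k] [Ring A] [Algebra k A]
    (𝒜 : ℕ → Submodule k A) [GradedAlgebra 𝒜]
    (hconn : 𝒜 0 = Submodule.span k {(1 : A)})
    (hfg : Algebra.FiniteType k A)
    (x : A) (d : ℕ) (hd : 1 ≤ d) (hx : x ∈ 𝒜 d)
    (hnormal : {y : A | ∃ a : A, y = x * a} = {y : A | ∃ a : A, y = a * x})
    (hquot : IsNoetherianRing (RingQuot (fun a b : A => a = x ∧ b = 0))ᵐᵒᵖ) :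
    IsNoetherianRing Aᵐᵒᵖ := by
  have hlift := lift_gen x hnormal hquot
  have hgr := graded_fg 𝒜 x d hd hx hnormal hlift
  have hall := ungraded_fg 𝒜 hgr
  haveI h1 : IsNoetherian Aᵐᵒᵖ A := isNoetherian_def.mpr hall
  haveI h2 : IsNoetherian Aᵐᵒᵖ Aᵐᵒᵖ := isNoetherian_of_linearEquiv (opEquiv A)
  exact h2
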